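/- arXiv:1003.0415 — 2 statements merged into one kernel-verified Lean document; each statement's English description precedes it below -/
import Mathlib

section
/- Let Φ be an m×N complex matrix with unit-norm columns and coherence μ > 0. Let S index a linearly independent family of s columns, let T be a set of t column indices, and let δ = |S ∩ T|. Assume s − δ − 1 ≥ 1 and t < (s − δ − 1)·( √( (1 + 1/(s−δ−1)) · μ⁻²/(s−δ−1) + 1/4 ) − 1 ). Then for every probability measure ν on ℂ^S absolutely continuous with respect to Lebesgue measure, ν{ x ∈ ℂ^S : Φ_S x ∈ range(Φ_T) } = 0. -/
noncomputable section

open Matrix MeasureTheory Finset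

namespace SparsityGap

variable {m N : ℕ}

/-- The `j`-th column of the dictionary `Φ`. -/
def col (Φ : Matrix (Fin m) (Fin N) ℂ) (j : Fin N) : Fin m → ℂ := fun i => Φ i j

/-- The column submatrix `Φ_S` of `Φ` with columns listed in `S`. -/
def sub (Φ : Matrix (Fin m) (Fin N) ℂ) (S : Finset (Fin N)) :
    Matrix (Fin m) {j // j ∈ S} ℂ :=
  Φ.submatrix id (fun j => (j : Fin N))

/-- `range (Φ_S)`: the span of the columns of `Φ` indexed by `S`. -/
def colSpan (Φ : Matrix (Fin m) (Fin N) ℂ) (S : Finset (Fin N)) :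
    Submodule ℂ (Fin m → ℂ) :=
  Submodule.span ℂ (Set.range fun j : {j // j ∈ S} => col Φ j)

/-- `S` indexes a linearly independent family of columns of `Φ`. -/
def LinIndepOn (Φ : Matrix (Fin m) (Fin N) ℂ) (S : Finset (Fin N)) : Prop :=
  LinearIndependent ℂ (fun j : {j // j ∈ S} => col Φ j)

/-- Each column of `Φ` has unit Euclidean norm. -/
def UnitColumns (Φ : Matrix (Fin m) (Fin N) ℂ) : Prop :=
  ∀ j, ∑ i, ‖Φ i j‖ ^ 2 = 1

/-- The coherence of `Φ` (the maximal inner product between distinct columns)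
is at most `μ`. -/
def CoherenceLE (Φ : Matrix (Fin m) (Fin N) ℂ) (μ : ℝ) : Prop :=
  ∀ j k, j ≠ k → ‖∑ i, star (Φ i j) * Φ i k‖ ≤ μ

/-- The ℓ₂ → ℓ₂ operator (spectral) norm of a matrix. -/
def opNorm {α β : Type*} [Fintype α] [Fintype β] [DecidableEq β]
    (A : Matrix α β ℂ) : ℝ :=
  ‖LinearMap.toContinuousLinearMap (Matrix.toEuclideanLin A)‖

/-- The Euclidean norm of a finitely supported vector. -/
def enorm {α : Type*} [Fintype α] (w : α → ℂ) : ℝ :=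
  Real.sqrt (∑ j, ‖w j‖ ^ 2)

end SparsityGap
namespace SparsityGap

open scoped ComplexOrder

private lemma numeric_aux {a t μ X : ℝ} (ha : 1 ≤ a) (hμ : 0 < μ) (htnn : 0 ≤ t)
    (hXeq : X * (a^2*μ^2) = (a+1) + (a^2*μ^2)/4) (hX4 : (1:ℝ)/4 ≤ X)
    (ht : t < a * (Real.sqrt X - 1)) :
    t * (t + a) * μ^2 < a + 1 := by
  have ha0 : (0:ℝ) < a := by linarith
  have hsX : (1:ℝ)/2 ≤ Real.sqrt X := by
    have h14 : Real.sqrt (1/4) = 1/2 := by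
      rw [show (1:ℝ)/4 = (1/2)^2 by norm_num, Real.sqrt_sq]; norm_num
    linarith [Real.sqrt_le_sqrt hX4]
  have hsq : Real.sqrt X ^ 2 = X := Real.sq_sqrt (by linarith)
  have h1 : t + a/2 < a * Real.sqrt X - a/2 := by nlinarith
  have h2 : (t + a/2)^2 < (a * Real.sqrt X - a/2)^2 := by nlinarith
  have h3' : t * (t + a) < a^2 * X - a^2 * Real.sqrt X := by nlinarith
  have h3 : t * (t + a) * μ^2 < (a^2 * X - a^2 * Real.sqrt X) * μ^2 :=
    mul_lt_mul_of_pos_right h3' (by positivity)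
  have hμ2 : (0:ℝ) < a^2 * μ^2 := by positivity
  have hint : a^2*μ^2 * (1/2) ≤ a^2*μ^2 * Real.sqrt X :=
    mul_le_mul_of_nonneg_left hsX hμ2.le
  nlinarith [h3, hXeq, hint, hμ2.le]

private lemma numeric {a t μ : ℝ} (ha : 1 ≤ a) (hμ : 0 < μ) (htnn : 0 ≤ t)
    (ht : t < a * (Real.sqrt ((1 + 1/a) * ((1/μ^2)/a) + 1/4) - 1)) :
    t * (t + a) * μ^2 < a + 1 := by
  have ha0 : (0:ℝ) < a := by linarith
  refine numeric_aux ha hμ htnn ?_ ?_ ht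
  · field_simp
  · have : (0:ℝ) ≤ (1 + 1/a) * ((1/μ^2)/a) := by positivity
    linarith

private lemma trace_eq' {n : Type*} [Fintype n] [DecidableEq n] {A : Matrix n n ℂ}
    (hA : A.IsHermitian) : A.trace = ∑ i, (hA.eigenvalues i : ℂ) := by
  conv_lhs => rw [hA.spectral_theorem, Unitary.conjStarAlgAut_apply]
  rw [Matrix.trace_mul_cycle,
    show star (hA.eigenvectorUnitary : Matrix n n ℂ) * (hA.eigenvectorUnitary : Matrix n n ℂ)
      = 1 from (Matrix.mem_unitaryGroup_iff').mp hA.eigenvectorUnitary.2,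
    one_mul, Matrix.trace_diagonal]
  rfl

private lemma trace_sq_eq' {n : Type*} [Fintype n] [DecidableEq n] {A : Matrix n n ℂ}
    (hA : A.IsHermitian) : (A * A).trace = ∑ i, ((hA.eigenvalues i : ℂ))^2 := by
  set U : Matrix n n ℂ := (hA.eigenvectorUnitary : Matrix n n ℂ) with hUdef
  set D : Matrix n n ℂ := diagonal (RCLike.ofReal ∘ hA.eigenvalues) with hDdef
  have hU : star U * U = 1 := (Matrix.mem_unitaryGroup_iff').mp hA.eigenvectorUnitary.2
  conv_lhs => rw [hA.spectral_theorem, Unitary.conjStarAlgAut_apply]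
  rw [Matrix.mul_assoc (U*D) (star U) ((U*D)*star U),
    ← Matrix.mul_assoc (star U) (U*D) (star U),
    ← Matrix.mul_assoc (star U) U D, hU, one_mul,
    Matrix.trace_mul_comm,
    Matrix.mul_assoc D (star U) (U*D),
    ← Matrix.mul_assoc (star U) U D, hU, one_mul,
    hDdef, Matrix.diagonal_mul_diagonal, Matrix.trace_diagonal]
  simp [sq]

private lemma key {m : ℕ} {ι : Type*} [Fintype ι] [DecidableEq ι]
    (B : Matrix (Fin m) ι ℂ) {μ : ℝ}
    (hcol : ∀ j, ∑ i, ‖B i j‖^2 = 1)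
    (hcoh : ∀ j k, j ≠ k → ‖∑ i, star (B i j) * B i k‖ ≤ μ) :
    (Fintype.card ι : ℝ)^2 ≤ (B.rank : ℝ) *
      ((Fintype.card ι : ℝ) + (Fintype.card ι : ℝ) * ((Fintype.card ι : ℝ) - 1) * μ^2) := by
  rcases isEmpty_or_nonempty ι with hι | hι
  · simp
  set M : ℕ := Fintype.card ι with hM
  have hM1 : 1 ≤ M := Fintype.card_pos
  set G : Matrix ι ι ℂ := Bᴴ * B with hGdef
  have hG : G.IsHermitian := Matrix.isHermitian_conjTranspose_mul_self B
  set lam : ι → ℝ := hG.eigenvalues with hlam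
  have hGentry : ∀ j k, G j k = ∑ i, star (B i j) * B i k := by
    intro j k
    simp [hGdef, Matrix.mul_apply, Matrix.conjTranspose_apply]
  have hGjj : ∀ j, G j j = ((1:ℝ) : ℂ) := by
    intro j
    rw [hGentry]
    have : ∀ i, star (B i j) * B i j = ((‖B i j‖^2 : ℝ) : ℂ) := by
      intro i; rw [Complex.star_def, Complex.conj_mul']; push_cast; ring
    simp_rw [this, ← Complex.ofReal_sum, hcol j]
  have hsum : ∑ i, lam i = (M : ℝ) := by
    have h1 : G.trace = ∑ i, (lam i : ℂ) := trace_eq' hG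
    have h2 : G.trace = ((M : ℝ) : ℂ) := by
      rw [Matrix.trace]
      simp_rw [Matrix.diag, hGjj]
      simp [hM]
    have := h1.symm.trans h2
    exact_mod_cast (by push_cast at this ⊢; exact this : ((∑ i, lam i : ℝ) : ℂ) = ((M:ℝ):ℂ))
  have hGsymm : ∀ j k, G k j = star (G j k) := by
    intro j k
    conv_lhs => rw [← hG]
    simp [Matrix.conjTranspose_apply]
  have hsum2 : ∑ i, (lam i)^2 = ∑ j, ∑ k, ‖G j k‖^2 := by
    have h1 : (G * G).trace = ∑ i, ((lam i : ℂ))^2 := trace_sq_eq' hG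
    have h2 : (G * G).trace = ((∑ j, ∑ k, ‖G j k‖^2 : ℝ) : ℂ) := by
      rw [Matrix.trace]
      simp_rw [Matrix.diag, Matrix.mul_apply]
      rw [Finset.sum_comm]
      push_cast
      congr 1; ext j; congr 1; ext k
      rw [hGsymm j k, Complex.star_def, Complex.conj_mul']
    have := h1.symm.trans h2
    have : ((∑ i, (lam i)^2 : ℝ) : ℂ) = ((∑ j, ∑ k, ‖G j k‖^2 : ℝ) : ℂ) := by
      push_cast at this ⊢; exact this
    exact_mod_cast this
  have hbound : ∑ j, ∑ k, ‖G j k‖^2 ≤ (M : ℝ) + (M : ℝ) * ((M : ℝ) - 1) * μ^2 := by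
    have hrow : ∀ j, ∑ k, ‖G j k‖^2 ≤ 1 + ((M : ℝ) - 1) * μ^2 := by
      intro j
      rw [← Finset.sum_erase_add _ _ (mem_univ j)]
      have hdiag : ‖G j j‖^2 = 1 := by rw [hGjj]; simp
      have hoff : ∑ k ∈ univ.erase j, ‖G j k‖^2 ≤ ((M : ℝ) - 1) * μ^2 := by
        have hle : ∀ k ∈ univ.erase j, ‖G j k‖^2 ≤ μ^2 := by
          intro k hk
          have hne : j ≠ k := (Finset.ne_of_mem_erase hk).symm
          have := hcoh j k hne
          rw [hGentry]
          exact pow_le_pow_left₀ (norm_nonneg _) (by rw [← hGentry]; rw [hGentry]; exact this) 2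
        calc ∑ k ∈ univ.erase j, ‖G j k‖^2 ≤ (univ.erase j).card • μ^2 :=
              Finset.sum_le_card_nsmul _ _ _ hle
          _ = ((univ.erase j).card : ℝ) * μ^2 := by rw [nsmul_eq_mul]
          _ = ((M : ℝ) - 1) * μ^2 := by
              rw [Finset.card_erase_of_mem (mem_univ j), Finset.card_univ]
              congr 1
              rw [Nat.cast_sub hM1]; simp
      linarith
    calc ∑ j, ∑ k, ‖G j k‖^2 ≤ ∑ _j : ι, (1 + ((M : ℝ) - 1) * μ^2) :=
          Finset.sum_le_sum (fun j _ => hrow j)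
      _ = (M : ℝ) * (1 + ((M : ℝ) - 1) * μ^2) := by
          rw [Finset.sum_const, Finset.card_univ, nsmul_eq_mul]
      _ = (M : ℝ) + (M : ℝ) * ((M : ℝ) - 1) * μ^2 := by ring
  set P : Finset ι := univ.filter (fun i => lam i ≠ 0) with hP
  have hPsum : ∑ i ∈ P, lam i = ∑ i, lam i := Finset.sum_filter_ne_zero _
  have hCS : (∑ i ∈ P, lam i)^2 ≤ (P.card : ℝ) * ∑ i ∈ P, (lam i)^2 :=
    sq_sum_le_card_mul_sum_sq
  have hPrank : P.card = B.rank := by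
    rw [← Matrix.rank_conjTranspose_mul_self B, ← hGdef,
      hG.rank_eq_card_non_zero_eigs, Fintype.card_subtype]
  have hsub : ∑ i ∈ P, (lam i)^2 ≤ ∑ i, (lam i)^2 :=
    Finset.sum_le_sum_of_subset_of_nonneg (Finset.filter_subset _ _)
      (fun i _ _ => sq_nonneg _)
  have hrank0 : (0:ℝ) ≤ (B.rank : ℝ) := Nat.cast_nonneg _
  calc (M : ℝ)^2 = (∑ i ∈ P, lam i)^2 := by rw [hPsum, hsum]
    _ ≤ (P.card : ℝ) * ∑ i ∈ P, (lam i)^2 := hCS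
    _ ≤ (B.rank : ℝ) * ∑ i, (lam i)^2 := by
        rw [hPrank]
        exact mul_le_mul_of_nonneg_left hsub hrank0
    _ ≤ (B.rank : ℝ) * ((M : ℝ) + (M : ℝ) * ((M : ℝ) - 1) * μ^2) := by
        rw [hsum2]
        exact mul_le_mul_of_nonneg_left hbound hrank0

/-- Corollary 12.  Let `Φ` have unit-norm columns and
coherence at most `μ > 0`.  Let `S` index a linearly independent family of
`s` columns, let `T` be a set of `t` columns, and let `δ = |S ∩ T|`.  If
`s − δ − 1 ≥ 1` and
`t < (s − δ − 1)·(√((1 + 1/(s−δ−1))·μ⁻²/(s−δ−1) + 1/4) − 1)`, then a generic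
signal in `range(Φ_S)` almost surely cannot be represented using the columns
in `T`. -/
theorem sparsity_gap_reverted {m N : ℕ}
    (Φ : Matrix (Fin m) (Fin N) ℂ) (μ : ℝ) (hμ : 0 < μ)
    (hcol : UnitColumns Φ) (hcoh : CoherenceLE Φ μ)
    (S T : Finset (Fin N)) (hS : LinIndepOn Φ S)
    (hsδ : (1 : ℝ) ≤ (S.card : ℝ) - ((S ∩ T).card : ℝ) - 1)
    (ht : (T.card : ℝ) <
      ((S.card : ℝ) - ((S ∩ T).card : ℝ) - 1) *
        (Real.sqrt
          ((1 + 1 / ((S.card : ℝ) - ((S ∩ T).card : ℝ) - 1)) *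
              ((1 / μ ^ 2) / ((S.card : ℝ) - ((S ∩ T).card : ℝ) - 1)) +
            1 / 4) - 1))
    (ν : Measure ({j // j ∈ S} → ℂ)) (hν : IsProbabilityMeasure ν)
    (hac : ν ≪ volume) :
    ν {x | (sub Φ S).mulVec x ∈ colSpan Φ T} = 0 := by
  classical
  set W : Submodule ℂ ({j // j ∈ S} → ℂ) :=
    Submodule.comap ((sub Φ S).mulVecLin) (colSpan Φ T) with hWdef
  have hset : {x | (sub Φ S).mulVec x ∈ colSpan Φ T} = (W : Set _) := rfl
  by_cases hW : W = ⊤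
  · exfalso
    have hall : ∀ x, (sub Φ S).mulVec x ∈ colSpan Φ T := fun x => by
      have hx : x ∈ W := hW ▸ Submodule.mem_top
      exact hx
    have hScol : ∀ j (hj : j ∈ S), col Φ j ∈ colSpan Φ T := by
      intro j hj
      have h := hall (Pi.single ⟨j, hj⟩ 1)
      rwa [Matrix.mulVec_single_one] at h
    set U : Finset (Fin N) := S ∪ T with hU
    have hUle : colSpan Φ U ≤ colSpan Φ T := by
      rw [colSpan, Submodule.span_le]
      rintro _ ⟨⟨j, hj⟩, rfl⟩
      rcases Finset.mem_union.mp hj with h | h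
      · exact hScol j h
      · exact Submodule.subset_span ⟨⟨j, h⟩, rfl⟩
    have hfin : Module.Finite ℂ (colSpan Φ T) := by
      apply FiniteDimensional.finiteDimensional_submodule
    have hrankU : (sub Φ U).rank ≤ T.card := by
      have h1 : (sub Φ U).rank = Module.finrank ℂ (colSpan Φ U) := by
        rw [Matrix.rank, Matrix.range_mulVecLin]
        rfl
      have h2 : Module.finrank ℂ (colSpan Φ U) ≤ Module.finrank ℂ (colSpan Φ T) :=
        Submodule.finrank_mono hUle
      have h3 : Module.finrank ℂ (colSpan Φ T) ≤ Fintype.card {j // j ∈ T} :=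
        finrank_range_le_card _
      rw [h1]
      exact (h2.trans h3).trans_eq (Fintype.card_coe T)
    -- apply the key inequality
    have hkey := key (sub Φ U)
      (fun j => hcol (j : Fin N))
      (fun j k hjk => hcoh (j : Fin N) (k : Fin N) (fun h => hjk (Subtype.ext h)))
    rw [Fintype.card_coe U] at hkey
    -- cardinalities
    set n : ℕ := (S \ T).card with hn
    have hMcard : U.card = n + T.card := by
      rw [hU, ← Finset.sdiff_union_self_eq_union,
        Finset.card_union_of_disjoint Finset.sdiff_disjoint]
    have hncast : (n : ℝ) = (S.card : ℝ) - ((S ∩ T).card : ℝ) := by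
      have := Finset.card_sdiff_add_card_inter S T
      have h' : (n : ℝ) + ((S ∩ T).card : ℝ) = (S.card : ℝ) := by exact_mod_cast this
      linarith
    rw [← hncast] at ht hsδ
    have hnum := numeric (a := (n : ℝ) - 1) (t := (T.card : ℝ)) (μ := μ)
      hsδ hμ (Nat.cast_nonneg _) ht
    -- combine
    have hrankcast : ((sub Φ U).rank : ℝ) ≤ (T.card : ℝ) := by exact_mod_cast hrankU
    have hMc : (U.card : ℝ) = (n : ℝ) + (T.card : ℝ) := by exact_mod_cast hMcard
    have hn2 : (2 : ℝ) ≤ (n : ℝ) := by linarith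
    have hMpos : (0 : ℝ) < (U.card : ℝ) := by
      rw [hMc]; have : (0:ℝ) ≤ (T.card : ℝ) := Nat.cast_nonneg _; linarith
    have ht0 : (0:ℝ) ≤ (T.card : ℝ) := Nat.cast_nonneg _
    have hμ2 : (0:ℝ) ≤ μ^2 := sq_nonneg _
    -- M^2 ≤ rank * (M + M(M-1)μ²) ≤ t*(M + M(M-1)μ²)
    have h4 : (U.card : ℝ)^2 ≤ (T.card : ℝ) *
        ((U.card : ℝ) + (U.card : ℝ) * ((U.card : ℝ) - 1) * μ^2) := by
      refine hkey.trans (mul_le_mul_of_nonneg_right hrankcast ?_)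
      nlinarith
    -- conclude n ≤ t(M-1)μ² and contradiction with hnum
    have h5 : (U.card : ℝ) ≤ (T.card : ℝ) + (T.card : ℝ) * ((U.card : ℝ) - 1) * μ^2 :=
      le_of_mul_le_mul_left (by nlinarith [h4]) hMpos
    have h6 : (T.card : ℝ) * ((U.card : ℝ) - 1) * μ^2
        = (T.card : ℝ) * ((T.card : ℝ) + ((n : ℝ) - 1)) * μ^2 := by
      rw [hMc]; ring
    rw [h6] at h5
    linarith [hnum, h5, hMc]
  · rw [hset]
    apply hac
    have hW' : (Submodule.restrictScalars ℝ W) ≠ ⊤ := by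
      intro h
      exact hW (Submodule.restrictScalars_injective ℝ _ _ (by rw [h, Submodule.restrictScalars_top]))
    have h0 := MeasureTheory.Measure.addHaar_submodule
      (volume : Measure ({j // j ∈ S} → ℂ)) (Submodule.restrictScalars ℝ W) hW'
    exact h0

end SparsityGap
end
end

section
/- Let Φ be an m×N complex matrix with unit-norm columns that is a tight frame with ‖Φ‖² = N/m. Let S index a linearly independent family of s columns such that ‖(Φ_SᴴΦ_S)⁻¹Φ_Sᴴ‖ ≤ √2 and max_{v ∉ S} ‖Φ_Sᴴ φ_v‖₂ ≤ 1/2. Let T be a set of t column indices with overlap δ = |S ∩ T|, and assume t < (s − δ·m/(2N)) · (1 − m/(2N))⁻¹. Then for every probability measure ν on ℂ^S absolutely continuous with respect to Lebesgue measure, ν{ x ∈ ℂ^S : Φ_S x ∈ range(Φ_T) } = 0; that is, a generic signal in range(Φ_S) almost surely cannot be represented using the columns in T. -/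
noncomputable section

open Matrix MeasureTheory Finset

namespace SparsityGap

/-- The pseudoinverse `Φ_S† = (Φ_Sᴴ Φ_S)⁻¹ Φ_Sᴴ` of `Φ_S`. -/
def pinv {m N : ℕ} (Φ : Matrix (Fin m) (Fin N) ℂ) (S : Finset (Fin N)) :
    Matrix {j // j ∈ S} (Fin m) ℂ :=
  ((sub Φ S)ᴴ * sub Φ S)⁻¹ * (sub Φ S)ᴴ


open scoped ComplexOrder

def esq {α : Type*} [Fintype α] (w : α → ℂ) : ℝ := ∑ j, ‖w j‖ ^ 2

variable {α β : Type*} [Fintype α] [Fintype β]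

lemma esq_nonneg (w : α → ℂ) : 0 ≤ esq w :=
  Finset.sum_nonneg fun _ _ => sq_nonneg _

lemma enorm_sq (w : α → ℂ) : enorm w ^ 2 = esq w :=
  Real.sq_sqrt (esq_nonneg w)

lemma enorm_nonneg (w : α → ℂ) : 0 ≤ enorm w := Real.sqrt_nonneg _

lemma enorm_eq_norm (w : α → ℂ) :
    enorm w = ‖(WithLp.equiv 2 (α → ℂ)).symm w‖ := by
  rw [EuclideanSpace.norm_eq]; rfl

lemma opNorm_nonneg [DecidableEq β] (A : Matrix α β ℂ) : 0 ≤ opNorm A := norm_nonneg _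

lemma enorm_mulVec_le [DecidableEq β] (A : Matrix α β ℂ) (x : β → ℂ) :
    enorm (A *ᵥ x) ≤ opNorm A * enorm x := by
  rw [enorm_eq_norm, enorm_eq_norm]
  exact (LinearMap.toContinuousLinearMap (Matrix.toEuclideanLin A)).le_opNorm ((WithLp.equiv 2 (β → ℂ)).symm x)

lemma opNorm_conjTranspose [DecidableEq α] [DecidableEq β] (A : Matrix α β ℂ) :
    opNorm Aᴴ = opNorm A := by
  unfold opNorm
  rw [Matrix.toEuclideanLin_conjTranspose_eq_adjoint,
    LinearMap.adjoint_toContinuousLinearMap]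
  exact ContinuousLinearMap.adjoint.norm_map _

lemma star_dot_self (w : α → ℂ) : star w ⬝ᵥ w = (esq w : ℂ) := by
  simp only [dotProduct, Pi.star_apply, esq]
  push_cast
  refine Finset.sum_congr rfl fun i _ => ?_
  rw [Complex.star_def, RCLike.conj_mul]
  norm_cast



variable {α ι : Type*} [Fintype α] [Fintype ι] [DecidableEq ι]

lemma dot_star_self_eq_zero {w : α → ℂ} (h : star w ⬝ᵥ w = 0) : w = 0 := by
  rwa [dotProduct_star_self_eq_zero] at h

/-- Gram matrix of a matrix with linearly independent columns is invertible. -/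
lemma gram_isUnit (B : Matrix α ι ℂ) (h : LinearIndependent ℂ (fun j => Bᵀ j)) :
    IsUnit (Bᴴ * B).det := by
  have hinjB : Function.Injective B.mulVec := Matrix.mulVec_injective_iff.2 h
  rw [← Matrix.isUnit_iff_isUnit_det, ← Matrix.mulVec_injective_iff_isUnit]
  have hker : ∀ x, (Bᴴ * B) *ᵥ x = 0 → x = 0 := by
    intro x hx
    have h0 : star x ⬝ᵥ ((Bᴴ * B) *ᵥ x) = 0 := by rw [hx, dotProduct_zero]
    rw [← Matrix.mulVec_mulVec, Matrix.dotProduct_mulVec, ← Matrix.star_mulVec] at h0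
    have hBx : B *ᵥ x = 0 := dot_star_self_eq_zero h0
    have : B *ᵥ x = B *ᵥ 0 := by rw [hBx, Matrix.mulVec_zero]
    exact hinjB this
  intro x y hxy
  have h0 : (Bᴴ * B) *ᵥ (x - y) = 0 := by
    rw [Matrix.mulVec_sub, hxy, sub_self]
  exact sub_eq_zero.mp (hker _ h0)

section Proj
variable (B : Matrix α ι ℂ)

/-- Orthogonal projector onto the column span of `B`. -/
def proj : Matrix α α ℂ := B * (Bᴴ * B)⁻¹ * Bᴴ

lemma gram_inv_conjTranspose : ((Bᴴ * B)⁻¹)ᴴ = (Bᴴ * B)⁻¹ := by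
  rw [Matrix.conjTranspose_nonsing_inv, Matrix.conjTranspose_mul,
    Matrix.conjTranspose_conjTranspose]

lemma proj_herm : (proj B)ᴴ = proj B := by
  unfold proj
  rw [Matrix.conjTranspose_mul, Matrix.conjTranspose_mul,
    Matrix.conjTranspose_conjTranspose, gram_inv_conjTranspose, Matrix.mul_assoc]

lemma proj_mul_self (hG : IsUnit (Bᴴ * B).det) : proj B * proj B = proj B := by
  unfold proj
  have h1 : (Bᴴ * B)⁻¹ * (Bᴴ * B) = 1 := Matrix.nonsing_inv_mul _ hG
  calc B * (Bᴴ * B)⁻¹ * Bᴴ * (B * (Bᴴ * B)⁻¹ * Bᴴ)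
      = B * ((Bᴴ * B)⁻¹ * (Bᴴ * B)) * ((Bᴴ * B)⁻¹ * Bᴴ) := by
        simp only [Matrix.mul_assoc]
    _ = B * (Bᴴ * B)⁻¹ * Bᴴ := by rw [h1, Matrix.mul_one, Matrix.mul_assoc]

lemma proj_mul_base (hG : IsUnit (Bᴴ * B).det) : proj B * B = B := by
  unfold proj
  have h1 : (Bᴴ * B)⁻¹ * (Bᴴ * B) = 1 := Matrix.nonsing_inv_mul _ hG
  calc B * (Bᴴ * B)⁻¹ * Bᴴ * B = B * ((Bᴴ * B)⁻¹ * (Bᴴ * B)) := by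
        simp only [Matrix.mul_assoc]
    _ = B := by rw [h1, Matrix.mul_one]

lemma trace_proj (hG : IsUnit (Bᴴ * B).det) :
    (proj B).trace = (Fintype.card ι : ℂ) := by
  unfold proj
  rw [Matrix.trace_mul_comm (B * (Bᴴ * B)⁻¹) Bᴴ, ← Matrix.mul_assoc,
    Matrix.mul_nonsing_inv _ hG, Matrix.trace_one]

lemma proj_fix_mem (hG : IsUnit (Bᴴ * B).det) {u : α → ℂ}
    (hu : u ∈ Submodule.span ℂ (Set.range fun j => Bᵀ j)) :
    proj B *ᵥ u = u := by
  induction hu using Submodule.span_induction with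
  | mem x hx =>
    obtain ⟨j, rfl⟩ := hx
    show proj B *ᵥ Bᵀ j = Bᵀ j
    have h1 : B *ᵥ Pi.single j 1 = Bᵀ j := Matrix.mulVec_single_one B j
    rw [← h1, Matrix.mulVec_mulVec, proj_mul_base B hG]
  | zero => rw [Matrix.mulVec_zero]
  | add x y _ _ hx hy => rw [Matrix.mulVec_add, hx, hy]
  | smul c x _ hx => rw [Matrix.mulVec_smul, hx]

lemma proj_mem (x : α → ℂ) :
    proj B *ᵥ x ∈ Submodule.span ℂ (Set.range fun j => Bᵀ j) := by
  have h1 : proj B *ᵥ x = B *ᵥ (((Bᴴ * B)⁻¹ * Bᴴ) *ᵥ x) := by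
    rw [Matrix.mulVec_mulVec, ← Matrix.mul_assoc]; rfl
  have h2 : Submodule.span ℂ (Set.range fun j => Bᵀ j)
      = LinearMap.range B.mulVecLin := by
    rw [Matrix.range_mulVecLin]; rfl
  rw [h1, h2]
  exact ⟨_, rfl⟩

end Proj


/-- Pythagoras-type bound: if `Q` is a Hermitian projector fixing `u` with
`u ⊥ (φ - u)`, then `‖u‖² ≤ ‖Qφ‖²`. -/
lemma esq_le_esq_proj (Q : Matrix α α ℂ) (hh : Qᴴ = Q)
    (φ u : α → ℂ) (hu : Q *ᵥ u = u) (horth : star u ⬝ᵥ (φ - u) = 0) :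
    esq u ≤ esq (Q *ᵥ φ) := by
  set w : α → ℂ := Q *ᵥ (φ - u) with hw
  have hdecomp : Q *ᵥ φ = u + w := by
    have h : u + (φ - u) = φ := by ring
    rw [← h, Matrix.mulVec_add, hu]
  have hstaruQ : star u ᵥ* Q = star u := by
    have := Matrix.star_mulVec (M := Qᴴ) (v := u)
    rw [Matrix.conjTranspose_conjTranspose] at this
    rw [← this, hh, hu]
  have c1 : star u ⬝ᵥ w = 0 := by
    rw [hw, Matrix.dotProduct_mulVec, hstaruQ, horth]
  have c2 : star w ⬝ᵥ u = 0 := by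
    rw [Matrix.star_dotProduct, c1, star_zero]
  have hsum : (esq (u + w) : ℂ) = (esq u : ℂ) + (esq w : ℂ) := by
    rw [← star_dot_self, ← star_dot_self, ← star_dot_self]
    rw [star_add, add_dotProduct, dotProduct_add, dotProduct_add,
      c1, c2]
    ring
  have hreal : esq (u + w) = esq u + esq w := by exact_mod_cast hsum
  rw [hdecomp, hreal]
  linarith [esq_nonneg w]

/-- `∑_v ‖(col v of C)‖² = tr (Cᴴ C)` -/
lemma sum_esq_cols (C : Matrix α β ℂ) :
    ((∑ v, esq (fun i => C i v) : ℝ) : ℂ) = (Cᴴ * C).trace := by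
  rw [Matrix.trace]
  push_cast
  refine Finset.sum_congr rfl fun v _ => ?_
  rw [Matrix.diag_apply, Matrix.mul_apply]
  unfold esq
  push_cast
  refine Finset.sum_congr rfl fun i _ => ?_
  rw [Matrix.conjTranspose_apply, Complex.star_def, RCLike.conj_mul]
  norm_cast




variable {m N : ℕ}

lemma trace_conjTranspose_mul_self_eq_zero {α β : Type*} [Fintype α] [Fintype β]
    {B : Matrix α β ℂ} (h : (Bᴴ * B).trace = 0) : B = 0 := by
  have h1 : ((∑ v, esq (fun i => B i v) : ℝ) : ℂ) = 0 := by
    rw [sum_esq_cols]; exact h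
  have h2 : (∑ v, esq (fun i => B i v) : ℝ) = 0 := by exact_mod_cast h1
  have h3 : ∀ v, esq (fun i => B i v) = 0 := by
    intro v
    have := (Finset.sum_eq_zero_iff_of_nonneg
      (fun v _ => esq_nonneg (fun i => B i v))).1 h2
    exact this v (Finset.mem_univ v)
  ext i v
  have h4 := h3 v
  unfold esq at h4
  have h5 := (Finset.sum_eq_zero_iff_of_nonneg (fun i _ => sq_nonneg ‖B i v‖)).1 h4
    i (Finset.mem_univ i)
  have : ‖B i v‖ = 0 := by
    have := sq_eq_zero_iff.mp h5; simpa using this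
  simpa using this

/-- A unit-norm tight frame satisfies `Φ Φᴴ = (N/m) • 1`. -/
lemma tight_gram (Φ : Matrix (Fin m) (Fin N) ℂ) (hcol : UnitColumns Φ)
    (htight : opNorm Φ ^ 2 = (N : ℝ) / m) (hm : 0 < m) :
    Φ * Φᴴ = (((N : ℝ) / m : ℝ) : ℂ) • (1 : Matrix (Fin m) (Fin m) ℂ) := by
  set c : ℝ := (N : ℝ) / m with hc
  set D : Matrix (Fin m) (Fin m) ℂ := (c : ℂ) • 1 - Φ * Φᴴ with hD
  have hDherm : D.IsHermitian := by
    apply Matrix.IsHermitian.sub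
    · unfold Matrix.IsHermitian
      rw [Matrix.conjTranspose_smul, Matrix.conjTranspose_one]
      congr 1
      simp [Complex.star_def]
    · exact Matrix.isHermitian_mul_conjTranspose_self Φ
  have hDpsd : D.PosSemidef := by
    refine Matrix.PosSemidef.of_dotProduct_mulVec_nonneg hDherm fun x => ?_
    have hsm : star x ᵥ* Φ = star (Φᴴ *ᵥ x) := by
      rw [Matrix.star_mulVec, Matrix.conjTranspose_conjTranspose]
    have hx1 : star x ⬝ᵥ (D *ᵥ x) = ((c * esq x - esq (Φᴴ *ᵥ x) : ℝ) : ℂ) := by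
      rw [hD, Matrix.sub_mulVec, dotProduct_sub, Matrix.smul_mulVec,
        Matrix.one_mulVec, dotProduct_smul, star_dot_self,
        ← Matrix.mulVec_mulVec, Matrix.dotProduct_mulVec, hsm,
        star_dot_self]
      push_cast [smul_eq_mul]
      ring
    rw [hx1]
    rw [Complex.zero_le_real]
    have hb : enorm (Φᴴ *ᵥ x) ≤ opNorm Φ * enorm x := by
      have := enorm_mulVec_le Φᴴ x
      rwa [opNorm_conjTranspose] at this
    have hsq : enorm (Φᴴ *ᵥ x) ^ 2 ≤ (opNorm Φ * enorm x) ^ 2 := by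
      apply sq_le_sq' _ hb
      have := enorm_nonneg (Φᴴ *ᵥ x)
      nlinarith [enorm_nonneg x, opNorm_nonneg Φ]
    rw [mul_pow, htight, enorm_sq, enorm_sq] at hsq
    linarith
  have htr : D.trace = 0 := by
    have htr1 : (Φ * Φᴴ).trace = (N : ℂ) := by
      rw [Matrix.trace_mul_comm, ← sum_esq_cols]
      have : ∀ v, esq (fun i => Φ i v) = 1 := fun v => hcol v
      simp only [this]
      simp
    rw [hD, Matrix.trace_sub, Matrix.trace_smul, Matrix.trace_one, htr1]
    have hmne : (m : ℝ) ≠ 0 := Nat.cast_ne_zero.2 hm.ne'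
    rw [hc]
    push_cast
    simp only [smul_eq_mul, Fintype.card_fin]
    field_simp
    ring
  obtain ⟨B, hB⟩ : ∃ B : Matrix (Fin m) (Fin m) ℂ, D = Bᴴ * B :=
    ⟨0, by rw [(Matrix.PosSemidef.trace_eq_zero_iff hDpsd).1 htr]; simp⟩
  have hB0 : B = 0 := trace_conjTranspose_mul_self_eq_zero (by rw [← hB, htr])
  have hD0 : D = 0 := by rw [hB, hB0]; simp
  have h9 : (c : ℂ) • 1 - Φ * Φᴴ = 0 := by rw [← hD, hD0]
  have := sub_eq_zero.mp h9
  exact this.symm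

variable {m N : ℕ}

lemma colSpan_eq_range (Φ : Matrix (Fin m) (Fin N) ℂ) (S : Finset (Fin N)) :
    colSpan Φ S = LinearMap.range (sub Φ S).mulVecLin := by
  rw [Matrix.range_mulVecLin]; rfl


set_option maxHeartbeats 1000000 in
/-- Theorem 19, sparsity gap under weak incoherence.
Suppose `Φ` has unit-norm columns and is a tight frame (`‖Φ‖² = N/m`).  Let
`S` index a linearly independent family of `s` columns with `‖Φ_S†‖ ≤ √2` and
`max_{v ∉ S} ‖Φ_Sᴴ φ_v‖₂ ≤ 1/2`.  Let `T` be a set of `t` columns with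
overlap `δ = |S ∩ T|`, and assume `t < (s − δm/(2N))·(1 − m/(2N))⁻¹`.  Then a
generic signal in `range(Φ_S)` almost surely cannot be represented using the
columns in `T`. -/
theorem sparsity_gap_weak_incoherence {m N : ℕ}
    (Φ : Matrix (Fin m) (Fin N) ℂ) (hcol : UnitColumns Φ)
    (htight : opNorm Φ ^ 2 = (N : ℝ) / m)
    (S : Finset (Fin N)) (hS : LinIndepOn Φ S)
    (hpinv : opNorm (pinv Φ S) ≤ Real.sqrt 2)
    (hmax : ∀ v ∉ S, enorm ((sub Φ S)ᴴ.mulVec (col Φ v)) ≤ 1 / 2)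
    (T : Finset (Fin N))
    (ht : (T.card : ℝ) <
      ((S.card : ℝ) - ((S ∩ T).card : ℝ) * m / (2 * N)) * (1 - (m : ℝ) / (2 * N))⁻¹)
    (ν : Measure ({j // j ∈ S} → ℂ)) (hν : IsProbabilityMeasure ν)
    (hac : ν ≪ volume) :
    ν {x | (sub Φ S).mulVec x ∈ colSpan Φ T} = 0 := by
  classical
  -- degenerate cases
  rcases Nat.eq_zero_or_pos N with rfl | hN
  · exfalso
    have hS0 : S = ∅ := Finset.eq_empty_of_isEmpty S
    have hT0 : T = ∅ := Finset.eq_empty_of_isEmpty T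
    rw [hS0, hT0] at ht
    norm_num at ht
  rcases Nat.eq_zero_or_pos m with rfl | hm
  · exact absurd (hcol ⟨0, hN⟩) (by simp)
  by_cases hsub : colSpan Φ S ≤ colSpan Φ T
  · -- the contradiction branch
    exfalso
    set c : ℝ := (N : ℝ) / m with hc
    have hcpos : 0 < c := div_pos (Nat.cast_pos.2 hN) (Nat.cast_pos.2 hm)
    have hgram : Φ * Φᴴ = ((c : ℝ) : ℂ) • (1 : Matrix (Fin m) (Fin m) ℂ) :=
      tight_gram Φ hcol htight hm
    set A := sub Φ S with hA
    have hGA : IsUnit ((Aᴴ * A).det) := gram_isUnit A hS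
    set P := proj A with hPdef
    -- choose a linearly independent spanning subfamily for T
    obtain ⟨b, hbsub, hbspan, hbindep⟩ :=
      exists_linearIndependent ℂ (Set.range fun j : {j // j ∈ T} => col Φ j)
    have hbfin : b.Finite := (Set.finite_range _).subset hbsub
    haveI : Fintype b := hbfin.fintype
    set B : Matrix (Fin m) b ℂ := Matrix.of (fun i (w : b) => (w : Fin m → ℂ) i) with hBdef
    have hBindep : LinearIndependent ℂ (fun w : b => Bᵀ w) := hbindep
    have hGB : IsUnit ((Bᴴ * B).det) := gram_isUnit B hBindep
    set Q := proj B with hQdef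
    have hBspan : Submodule.span ℂ (Set.range fun w : b => Bᵀ w) = colSpan Φ T := by
      have h1 : (Set.range fun w : b => Bᵀ w) = b := Subtype.range_coe
      rw [h1, hbspan]; rfl
    -- cardinality of b
    have hd : Fintype.card b ≤ T.card := by
      calc Fintype.card b = Nat.card b := Nat.card_eq_fintype_card.symm
        _ ≤ Nat.card (Set.range fun j : {j // j ∈ T} => col Φ j) := by
            rw [Nat.card_coe_set_eq, Nat.card_coe_set_eq]
            exact Set.ncard_le_ncard hbsub (Set.finite_range _)
        _ ≤ Nat.card {j // j ∈ T} := Finite.card_range_le _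
        _ = T.card := by rw [Nat.card_eq_fintype_card, Fintype.card_coe]
    -- projector facts
    have hPfix : ∀ u ∈ colSpan Φ S, P *ᵥ u = u := fun u hu => proj_fix_mem A hGA hu
    have hQfix : ∀ u ∈ colSpan Φ T, Q *ᵥ u = u := by
      intro u hu
      exact proj_fix_mem B hGB (hBspan ▸ hu)
    have hPmem : ∀ x, P *ᵥ x ∈ colSpan Φ S := fun x => proj_mem A x
    have hφS : ∀ v ∈ S, col Φ v ∈ colSpan Φ S := by
      intro v hv
      exact Submodule.subset_span ⟨⟨v, hv⟩, rfl⟩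
    have hφT : ∀ v ∈ T, col Φ v ∈ colSpan Φ T := by
      intro v hv
      exact Submodule.subset_span ⟨⟨v, hv⟩, rfl⟩
    -- trace-based sum identity
    have key : ∀ (M : Matrix (Fin m) (Fin m) ℂ), Mᴴ = M → M * M = M →
        ((∑ v, esq (M *ᵥ col Φ v) : ℝ) : ℂ) = ((c : ℝ) : ℂ) * M.trace := by
      intro M hMh hMi
      have h1 : ∀ v, M *ᵥ col Φ v = fun i => (M * Φ) i v := by
        intro v; funext i
        simp [Matrix.mulVec, Matrix.mul_apply, dotProduct, col]
      have h2 : (∑ v, esq (M *ᵥ col Φ v) : ℝ)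
          = ∑ v, esq (fun i => (M * Φ) i v) := by
        refine Finset.sum_congr rfl fun v _ => ?_
        rw [h1]
      rw [h2, sum_esq_cols]
      have h3 : (M * Φ)ᴴ * (M * Φ) = Φᴴ * (M * Φ) := by
        rw [Matrix.conjTranspose_mul, hMh, Matrix.mul_assoc, ← Matrix.mul_assoc M,
          hMi]
      rw [h3, Matrix.trace_mul_comm, Matrix.mul_assoc, hgram, Matrix.mul_smul,
        Matrix.mul_one, Matrix.trace_smul, smul_eq_mul]
    -- sums for P and Q
    have hsumP : (∑ v, esq (P *ᵥ col Φ v) : ℝ) = c * S.card := by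
      have h1 := key P (proj_herm A) (proj_mul_self A hGA)
      rw [trace_proj A hGA, Fintype.card_coe] at h1
      exact_mod_cast h1
    have hsumQ : (∑ v, esq (Q *ᵥ col Φ v) : ℝ) = c * Fintype.card b := by
      have h1 := key Q (proj_herm B) (proj_mul_self B hGB)
      rw [trace_proj B hGB] at h1
      exact_mod_cast h1
    -- pointwise facts
    have hesqcol : ∀ v, esq (col Φ v) = 1 := fun v => hcol v
    have hPv1 : ∀ v ∈ S, esq (P *ᵥ col Φ v) = 1 := by
      intro v hv
      rw [hPfix _ (hφS v hv), hesqcol]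
    have hQv1 : ∀ v ∈ S ∪ T, esq (Q *ᵥ col Φ v) = 1 := by
      intro v hv
      rcases Finset.mem_union.mp hv with hv | hv
      · rw [hQfix _ (hsub (hφS v hv)), hesqcol]
      · rw [hQfix _ (hφT v hv), hesqcol]
    have hPhalf : ∀ v ∉ S, esq (P *ᵥ col Φ v) ≤ 1 / 2 := by
      intro v hv
      have hPv : P *ᵥ col Φ v = (pinv Φ S)ᴴ *ᵥ (Aᴴ *ᵥ col Φ v) := by
        rw [Matrix.mulVec_mulVec]
        congr 1
        rw [hPdef]
        unfold proj pinv
        rw [Matrix.conjTranspose_mul, gram_inv_conjTranspose,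
          Matrix.conjTranspose_conjTranspose, ← hA]
      have hop : opNorm ((pinv Φ S)ᴴ) = opNorm (pinv Φ S) := opNorm_conjTranspose _
      have h1 : enorm (P *ᵥ col Φ v) ≤ Real.sqrt 2 * (1 / 2) := by
        rw [hPv]
        calc enorm ((pinv Φ S)ᴴ *ᵥ (Aᴴ *ᵥ col Φ v))
            ≤ opNorm ((pinv Φ S)ᴴ) * enorm (Aᴴ *ᵥ col Φ v) := enorm_mulVec_le _ _
          _ ≤ Real.sqrt 2 * (1 / 2) := by
              apply mul_le_mul
              · rw [hop]; exact hpinv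
              · exact hmax v hv
              · exact enorm_nonneg _
              · positivity
      have h2 : enorm (P *ᵥ col Φ v) ^ 2 ≤ (Real.sqrt 2 * (1 / 2)) ^ 2 := by
        apply sq_le_sq' _ h1
        have := enorm_nonneg (P *ᵥ col Φ v)
        nlinarith [Real.sqrt_nonneg 2]
      rw [enorm_sq] at h2
      have h3 : (Real.sqrt 2 * (1 / 2)) ^ 2 = 1 / 2 := by
        rw [mul_pow, Real.sq_sqrt (by norm_num : (0:ℝ) ≤ 2)]
        norm_num
      linarith [h2, h3]
    have hQP : ∀ v, esq (P *ᵥ col Φ v) ≤ esq (Q *ᵥ col Φ v) := by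
      intro v
      set u := P *ᵥ col Φ v with hu
      have humem : u ∈ colSpan Φ T := hsub (hPmem _)
      have hQu : Q *ᵥ u = u := hQfix _ humem
      have horth : star u ⬝ᵥ (col Φ v - u) = 0 := by
        have hsu : star u = star (col Φ v) ᵥ* P := by
          rw [hu, Matrix.star_mulVec, proj_herm]
        rw [hsu, ← Matrix.dotProduct_mulVec, Matrix.mulVec_sub, hu,
          Matrix.mulVec_mulVec, proj_mul_self A hGA, sub_self,
          dotProduct_zero]
      exact esq_le_esq_proj Q (proj_herm B) (col Φ v) u hQu horth
    -- assemble sums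
    set U := S ∪ T with hU
    have hsplitQ : (∑ v, esq (Q *ᵥ col Φ v) : ℝ)
        = ∑ v ∈ U, esq (Q *ᵥ col Φ v) + ∑ v ∈ Uᶜ, esq (Q *ᵥ col Φ v) :=
      (Finset.sum_add_sum_compl U _).symm
    have hsplitP : (∑ v, esq (P *ᵥ col Φ v) : ℝ)
        = ∑ v ∈ U, esq (P *ᵥ col Φ v) + ∑ v ∈ Uᶜ, esq (P *ᵥ col Φ v) :=
      (Finset.sum_add_sum_compl U _).symm
    have hQU : (∑ v ∈ U, esq (Q *ᵥ col Φ v) : ℝ) = U.card := by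
      rw [Finset.sum_congr rfl (fun v hv => hQv1 v hv), Finset.sum_const,
        nsmul_eq_mul, mul_one]
    have hQUc : (∑ v ∈ Uᶜ, esq (P *ᵥ col Φ v) : ℝ)
        ≤ ∑ v ∈ Uᶜ, esq (Q *ᵥ col Φ v) :=
      Finset.sum_le_sum fun v _ => hQP v
    -- split P sum over U into S and T \ S
    have hUsplit : (∑ v ∈ U, esq (P *ᵥ col Φ v) : ℝ)
        = ∑ v ∈ S, esq (P *ᵥ col Φ v) + ∑ v ∈ T \ S, esq (P *ᵥ col Φ v) := by
      rw [hU]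
      rw [← Finset.sum_union (Finset.disjoint_sdiff)]
      congr 1
      rw [Finset.union_sdiff_self_eq_union]
    have hPS : (∑ v ∈ S, esq (P *ᵥ col Φ v) : ℝ) = S.card := by
      rw [Finset.sum_congr rfl (fun v hv => hPv1 v hv), Finset.sum_const,
        nsmul_eq_mul, mul_one]
    have hPTS : (∑ v ∈ T \ S, esq (P *ᵥ col Φ v) : ℝ) ≤ ((T \ S).card : ℝ) * (1 / 2) := by
      calc (∑ v ∈ T \ S, esq (P *ᵥ col Φ v) : ℝ)
          ≤ ∑ _v ∈ T \ S, (1 / 2 : ℝ) :=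
            Finset.sum_le_sum fun v hv => hPhalf v (Finset.mem_sdiff.mp hv).2
        _ = ((T \ S).card : ℝ) * (1 / 2) := by rw [Finset.sum_const, nsmul_eq_mul]
    -- cardinalities
    have hcardU : (U.card : ℝ) = (S.card : ℝ) + T.card - (S ∩ T).card := by
      have := Finset.card_union_add_card_inter S T
      rw [hU]
      have h2 : ((S ∪ T).card : ℝ) + ((S ∩ T).card : ℝ) = (S.card : ℝ) + T.card := by
        exact_mod_cast congrArg (fun n : ℕ => (n : ℝ)) this
      linarith
    have hcardTS : ((T \ S).card : ℝ) = (T.card : ℝ) - (S ∩ T).card := by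
      have h1 := Finset.card_sdiff_add_card_inter T S
      have h2 : (T ∩ S).card = (S ∩ T).card := by rw [Finset.inter_comm]
      rw [h2] at h1
      have h3 : ((T \ S).card : ℝ) + ((S ∩ T).card : ℝ) = (T.card : ℝ) := by
        exact_mod_cast congrArg (fun n : ℕ => (n : ℝ)) h1
      linarith
    -- main inequality
    set s : ℝ := (S.card : ℝ) with hsdef
    set t : ℝ := (T.card : ℝ) with htdef
    set δ : ℝ := ((S ∩ T).card : ℝ) with hδdef
    have hδt : δ ≤ t := by
      rw [hδdef, htdef]
      have : (S ∩ T).card ≤ T.card := Finset.card_le_card (Finset.inter_subset_right)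
      exact_mod_cast this
    have hmain : c * t ≥ c * s + (t - δ) / 2 := by
      have hdle : c * (Fintype.card b : ℝ) ≤ c * t := by
        apply mul_le_mul_of_nonneg_left _ hcpos.le
        rw [htdef]
        exact_mod_cast hd
      have hQsum : c * (Fintype.card b : ℝ)
          ≥ (s + t - δ) + (c * s - s - (t - δ) * (1 / 2)) := by
        have e1 : (∑ v ∈ Uᶜ, esq (P *ᵥ col Φ v) : ℝ)
            ≥ c * s - s - (t - δ) * (1 / 2) := by
          have := hsplitP
          rw [hsumP, hUsplit, hPS] at this
          have h5 : (∑ v ∈ T \ S, esq (P *ᵥ col Φ v) : ℝ) ≤ (t - δ) * (1/2) := by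
            calc (∑ v ∈ T \ S, esq (P *ᵥ col Φ v) : ℝ) ≤ ((T \ S).card : ℝ) * (1 / 2) := hPTS
              _ = (t - δ) * (1/2) := by rw [hcardTS]
          linarith
        have e2 : c * (Fintype.card b : ℝ) = (U.card : ℝ) + ∑ v ∈ Uᶜ, esq (Q *ᵥ col Φ v) := by
          rw [← hsumQ, hsplitQ, hQU]
        rw [e2, hcardU]
        have e3 : (∑ v ∈ Uᶜ, esq (Q *ᵥ col Φ v) : ℝ) ≥ c * s - s - (t - δ) * (1/2) :=
          le_trans e1 hQUc
        linarith
      linarith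
    -- contradiction with ht
    have hc1 : 1 ≤ c := by
      set v0 : Fin N := ⟨0, hN⟩
      have he1 : enorm (Φ *ᵥ Pi.single v0 1) = 1 := by
        rw [Matrix.mulVec_single_one]
        show Real.sqrt (∑ i, ‖Φ i v0‖ ^ 2) = 1
        rw [hcol v0, Real.sqrt_one]
      have he2 : enorm (Pi.single v0 (1:ℂ)) = 1 := by
        have hsum : (∑ j : Fin N, ‖(Pi.single v0 (1:ℂ) : Fin N → ℂ) j‖ ^ 2) = 1 := by
          rw [Finset.sum_eq_single v0]
          · simp
          · intro j _ hj; simp [Pi.single_apply, hj]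
          · intro h; exact absurd (Finset.mem_univ v0) h
        show Real.sqrt (∑ j : Fin N, ‖(Pi.single v0 (1:ℂ) : Fin N → ℂ) j‖ ^ 2) = 1
        rw [hsum, Real.sqrt_one]
      have hb := enorm_mulVec_le Φ (Pi.single v0 1)
      rw [he1, he2, mul_one] at hb
      calc (1:ℝ) = 1 ^ 2 := by norm_num
        _ ≤ opNorm Φ ^ 2 := by nlinarith [opNorm_nonneg Φ]
        _ = c := htight
    set μ : ℝ := (m : ℝ) / (2 * N) with hμ
    have hμpos : 0 < μ := by
      rw [hμ]
      apply div_pos (Nat.cast_pos.2 hm)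
      have : (0:ℝ) < (N:ℝ) := Nat.cast_pos.2 hN
      linarith
    have hμc : μ * (2 * c) = 1 := by
      rw [hμ, hc]
      field_simp
    have hμlt : μ < 1 := by nlinarith [hμc, hc1, hμpos]
    have ht' : t * (1 - μ) < s - δ * μ := by
      have hpos : (0:ℝ) < 1 - μ := by linarith
      have e : s - δ * (m:ℝ) / (2 * (N:ℝ)) = s - δ * μ := by rw [hμ]; ring
      rw [e] at ht
      calc t * (1 - μ) < ((s - δ * μ) * (1 - μ)⁻¹) * (1 - μ) :=
            mul_lt_mul_of_pos_right ht hpos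
        _ = s - δ * μ := by field_simp
    have hfinal : t * (1 - μ) * (2 * c) < (s - δ * μ) * (2 * c) :=
      mul_lt_mul_of_pos_right ht' (by linarith)
    have e1 : t * (1 - μ) * (2 * c) = 2 * c * t - t * (μ * (2 * c)) := by ring
    have e2 : (s - δ * μ) * (2 * c) = 2 * c * s - δ * (μ * (2 * c)) := by ring
    rw [e1, e2, hμc] at hfinal
    linarith [hmain]
  · -- the measure-zero branch
    set V : Submodule ℂ ({j // j ∈ S} → ℂ) :=
      Submodule.comap (sub Φ S).mulVecLin (colSpan Φ T) with hV
    have hset : {x | (sub Φ S).mulVec x ∈ colSpan Φ T} = (V : Set _) := by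
      ext x
      simp [hV, Submodule.mem_comap]
    have hVne : V ≠ ⊤ := by
      intro hV2
      apply hsub
      rw [colSpan_eq_range]
      rintro u ⟨x, rfl⟩
      have hx : x ∈ V := hV2 ▸ Submodule.mem_top
      exact hx
    have hres : (V.restrictScalars ℝ) ≠ ⊤ := by
      intro he
      apply hVne
      rw [Submodule.eq_top_iff']
      intro x
      have : x ∈ V.restrictScalars ℝ := he ▸ Submodule.mem_top
      exact this
    have hvol : volume (V : Set ({j // j ∈ S} → ℂ)) = 0 :=
      Measure.addHaar_submodule (volume : Measure ({j // j ∈ S} → ℂ))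
        (V.restrictScalars ℝ) hres
    rw [hset]
    exact hac hvol


end SparsityGap
end
end
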